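/- Let θ ∈ (0,1) and λ ∈ (0,1]. The map Ψ(g) = g − log(1 − λ + λ·e^{θg}) + log(1 − λ + λ·e^{−(1−θ)g}) is differentiable on ℝ with Ψ'(g) = 1 − (λθ·e^{θg})/(1 − λ + λ·e^{θg}) − (λ(1−θ)·e^{−(1−θ)g})/(1 − λ + λ·e^{−(1−θ)g}), and for every g ∈ ℝ one has 0 ≤ Ψ'(g) ≤ ρ, where ρ = 1 − λ·min(θ, 1−θ) ∈ (0,1). -/

import Mathlib

open Real

/-- One-block pre-arbitrage gap update map of the partially active AMM built on
a G3M with weights `(θ, 1-θ)`. -/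
noncomputable def Psi (θ lam g : ℝ) : ℝ :=
  g - Real.log (1 - lam + lam * Real.exp (θ * g))
    + Real.log (1 - lam + lam * Real.exp (-(1 - θ) * g))

/-- The claimed derivative of `Psi`. -/
noncomputable def PsiDeriv (θ lam g : ℝ) : ℝ :=
  1 - lam * θ * Real.exp (θ * g) / (1 - lam + lam * Real.exp (θ * g))
    - lam * (1 - θ) * Real.exp (-(1 - θ) * g) / (1 - lam + lam * Real.exp (-(1 - θ) * g))

lemma denom_pos' (lam x : ℝ) (h0 : 0 < lam) (h1 : lam ≤ 1) :
    0 < 1 - lam + lam * Real.exp x := by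
  nlinarith [Real.exp_pos x]

lemma hasDeriv_logterm (c lam : ℝ) (h0 : 0 < lam) (h1 : lam ≤ 1) (g : ℝ) :
    HasDerivAt (fun g => Real.log (1 - lam + lam * Real.exp (c * g)))
      (lam * c * Real.exp (c * g) / (1 - lam + lam * Real.exp (c * g))) g := by
  have h1' : HasDerivAt (fun g : ℝ => c * g) c g := by
    simpa using (hasDerivAt_id g).const_mul c
  have h2 : HasDerivAt (fun g : ℝ => Real.exp (c * g)) (Real.exp (c * g) * c) g :=
    h1'.exp
  have h3 : HasDerivAt (fun g : ℝ => 1 - lam + lam * Real.exp (c * g))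
      (lam * (Real.exp (c * g) * c)) g := (h2.const_mul lam).const_add (1 - lam)
  have h4 := h3.log (ne_of_gt (denom_pos' lam (c * g) h0 h1))
  convert h4 using 1
  ring

theorem stmt1 (θ lam : ℝ) (hθ : θ ∈ Set.Ioo (0:ℝ) 1) (hlam : lam ∈ Set.Ioc (0:ℝ) 1) :
    (∀ g : ℝ, HasDerivAt (Psi θ lam) (PsiDeriv θ lam g) g) ∧
    (∀ g : ℝ, 0 ≤ PsiDeriv θ lam g ∧ PsiDeriv θ lam g ≤ 1 - lam * min θ (1 - θ)) ∧
    1 - lam * min θ (1 - θ) ∈ Set.Ioo (0:ℝ) 1 := by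
  obtain ⟨hθ0, hθ1⟩ := hθ
  obtain ⟨hl0, hl1⟩ := hlam
  refine ⟨?_, ?_, ?_⟩
  · intro g
    have hA := hasDeriv_logterm θ lam hl0 hl1 g
    have hB := hasDeriv_logterm (-(1 - θ)) lam hl0 hl1 g
    have := ((hasDerivAt_id g).sub hA).add hB
    unfold Psi PsiDeriv
    exact this.congr_deriv (by ring)
  · intro g
    have hD1 := denom_pos' lam (θ * g) hl0 hl1
    have hD2 := denom_pos' lam (-(1 - θ) * g) hl0 hl1
    have hE1 := Real.exp_pos (θ * g)
    have hE2 := Real.exp_pos (-(1 - θ) * g)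
    set E1 := Real.exp (θ * g) with hE1def
    set E2 := Real.exp (-(1 - θ) * g) with hE2def
    have hA1 : lam * θ * E1 / (1 - lam + lam * E1) ≤ θ := by
      rw [div_le_iff₀ hD1]; nlinarith
    have hB1 : lam * (1 - θ) * E2 / (1 - lam + lam * E2) ≤ 1 - θ := by
      rw [div_le_iff₀ hD2]; nlinarith
    have hA0 : 0 ≤ lam * θ * E1 / (1 - lam + lam * E1) :=
      div_nonneg (mul_nonneg (mul_nonneg hl0.le hθ0.le) hE1.le) hD1.le
    have hB0 : 0 ≤ lam * (1 - θ) * E2 / (1 - lam + lam * E2) :=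
      div_nonneg (mul_nonneg (mul_nonneg hl0.le (by linarith)) hE2.le) hD2.le
    constructor
    · unfold PsiDeriv
      rw [← hE1def, ← hE2def]
      linarith
    · unfold PsiDeriv
      rw [← hE1def, ← hE2def]
      have hmin : lam * min θ (1 - θ) ≤
          lam * θ * E1 / (1 - lam + lam * E1)
            + lam * (1 - θ) * E2 / (1 - lam + lam * E2) := by
        rcases le_or_gt 0 g with hg | hg
        · have hE1ge : (1 : ℝ) ≤ E1 := Real.one_le_exp (by nlinarith : 0 ≤ θ * g)
          have hkey : lam * θ ≤ lam * θ * E1 / (1 - lam + lam * E1) := by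
            rw [le_div_iff₀ hD1]
            nlinarith [mul_nonneg (sub_nonneg.mpr hl1) (sub_nonneg.mpr hE1ge),
              mul_nonneg hl0.le hθ0.le]
          have hm : min θ (1 - θ) ≤ θ := min_le_left _ _
          have : lam * min θ (1 - θ) ≤ lam * θ :=
            mul_le_mul_of_nonneg_left hm hl0.le
          linarith
        · have hE2ge : (1 : ℝ) ≤ E2 :=
            Real.one_le_exp (by nlinarith : 0 ≤ -(1 - θ) * g)
          have hkey : lam * (1 - θ) ≤ lam * (1 - θ) * E2 / (1 - lam + lam * E2) := by
            rw [le_div_iff₀ hD2]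
            nlinarith [mul_nonneg (sub_nonneg.mpr hl1) (sub_nonneg.mpr hE2ge),
              mul_nonneg hl0.le (by linarith : (0:ℝ) ≤ 1 - θ)]
          have hm : min θ (1 - θ) ≤ 1 - θ := min_le_right _ _
          have : lam * min θ (1 - θ) ≤ lam * (1 - θ) :=
            mul_le_mul_of_nonneg_left hm hl0.le
          linarith
      linarith
  · have hm0 : 0 < min θ (1 - θ) := lt_min hθ0 (by linarith)
    have hm1 : min θ (1 - θ) ≤ θ := min_le_left _ _
    constructor
    · have : lam * min θ (1 - θ) < 1 := by nlinarith
      simpa using this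
    · nlinarith
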